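/- A finite simple graph G is an interval graph if and only if there exists a linear order C₁, …, C_ℓ of all maximal cliques of G that is v-consecutive for every vertex v of G. -/

import Mathlib

/-- An interval representation of a finite simple graph: each vertex `v` gets a nonempty
closed interval `[a v, b v] ⊆ ℝ` such that two distinct vertices are adjacent iff their
intervals intersect. -/
def HasIntervalRep {V : Type*} (G : SimpleGraph V) : Prop :=
  ∃ a b : V → ℝ, (∀ v, a v ≤ b v) ∧
    ∀ u v : V, u ≠ v →
      (G.Adj u v ↔ (Set.Icc (a u) (b u) ∩ Set.Icc (a v) (b v)).Nonempty)

/-- A maximal clique: a set of pairwise adjacent vertices not properly contained in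
another clique. -/
def IsMaxClique {V : Type*} (G : SimpleGraph V) (s : Set V) : Prop :=
  G.IsClique s ∧ ∀ t : Set V, G.IsClique t → s ⊆ t → s = t

/-- Any clique in a finite graph extends to a maximal clique. -/
lemma exists_maxClique_superset {V : Type*} [Fintype V] (G : SimpleGraph V)
    (s : Set V) (hs : G.IsClique s) : ∃ t, IsMaxClique G t ∧ s ⊆ t := by
  obtain ⟨t, ⟨ht, hst⟩, hmax⟩ := Set.Finite.exists_maximalFor id
    {t : Set V | G.IsClique t ∧ s ⊆ t} (Set.toFinite _) ⟨s, hs, subset_rfl⟩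
  exact ⟨t, ⟨ht, fun r hr htr =>
    Set.Subset.antisymm htr (hmax ⟨hr, hst.trans htr⟩ htr)⟩, hst⟩

/-- Fulkerson–Gross: a finite simple graph `G` is an interval graph iff
there is a linear order `C 0, …, C (ℓ-1)` of all maximal cliques of `G` that is
`v`-consecutive for every vertex `v` (the indices of the cliques containing `v` form a
set of consecutive integers). -/
theorem stmt_8 {V : Type*} [Fintype V] (G : SimpleGraph V) :
    HasIntervalRep G ↔
      ∃ (ℓ : ℕ) (C : Fin ℓ → Set V), Function.Injective C ∧
        (∀ s : Set V, s ∈ Set.range C ↔ IsMaxClique G s) ∧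
        (∀ v : V, ∀ i j k : Fin ℓ, i ≤ j → j ≤ k → v ∈ C i → v ∈ C k → v ∈ C j) := by
  classical
  constructor
  · rintro ⟨a, b, hab, hadj⟩
    by_cases hV : IsEmpty V
    · refine ⟨1, fun _ => (∅ : Set V), fun i j _ => Subsingleton.elim i j, ?_, ?_⟩
      · intro s
        have hs : s = ∅ := Set.eq_empty_of_isEmpty s
        subst hs
        constructor
        · intro _
          exact ⟨SimpleGraph.isClique_empty, fun t _ _ =>
            (Set.eq_empty_of_isEmpty t).symm⟩
        · intro _; exact ⟨0, rfl⟩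
      · intro v; exact hV.elim v
    · rw [not_isEmpty_iff] at hV
      -- every maximal clique is nonempty
      have hne : ∀ s : Set V, IsMaxClique G s → s.Nonempty := by
        intro s hs
        rcases Set.eq_empty_or_nonempty s with rfl | h
        · obtain ⟨v⟩ := hV
          have := hs.2 {v} (G.isClique_singleton v) (Set.empty_subset _)
          exact absurd this.symm (Set.singleton_ne_empty v)
        · exact h
      set p : Set V → ℝ := fun s => sSup (a '' s) with hp
      -- Lemma A : the point p s lies in every interval of the clique
      have hA : ∀ s : Set V, IsMaxClique G s → ∀ v ∈ s, a v ≤ p s ∧ p s ≤ b v := by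
        intro s hs v hv
        have hfin : (a '' s).Finite := (Set.toFinite s).image a
        have hne' : (a '' s).Nonempty := (hne s hs).image a
        have hmem : p s ∈ a '' s := hne'.csSup_mem hfin
        constructor
        · exact le_csSup hfin.bddAbove ⟨v, hv, rfl⟩
        · obtain ⟨w, hw, hpw⟩ := hmem
          rcases eq_or_ne w v with rfl | hwv
          · exact hpw ▸ hab w
          · have hadjwv := hs.1 hw hv hwv
            obtain ⟨y, ⟨h1, _⟩, ⟨_, h4⟩⟩ := (hadj w v hwv).mp hadjwv
            rw [← hpw]
            exact h1.trans h4
      -- Lemma B : if v's interval contains p s, then v ∈ s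
      have hB : ∀ s : Set V, IsMaxClique G s → ∀ v : V,
          a v ≤ p s → p s ≤ b v → v ∈ s := by
        intro s hs v hv1 hv2
        have hclique : G.IsClique (insert v s) := by
          intro x hx y hy hxy
          have hx' : p s ∈ Set.Icc (a x) (b x) := by
            rcases hx with rfl | hx
            · exact ⟨hv1, hv2⟩
            · exact ⟨(hA s hs x hx).1, (hA s hs x hx).2⟩
          have hy' : p s ∈ Set.Icc (a y) (b y) := by
            rcases hy with rfl | hy
            · exact ⟨hv1, hv2⟩
            · exact ⟨(hA s hs y hy).1, (hA s hs y hy).2⟩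
          exact (hadj x y hxy).mpr ⟨p s, hx', hy'⟩
        have := hs.2 (insert v s) hclique (Set.subset_insert v s)
        rw [this]
        exact Set.mem_insert v s
      -- injectivity of p on maximal cliques
      have hC : ∀ s t : Set V, IsMaxClique G s → IsMaxClique G t → p s = p t → s = t := by
        intro s t hs ht hst
        apply Set.Subset.antisymm
        · intro v hv
          exact hB t ht v (hst ▸ (hA s hs v hv).1) (hst ▸ (hA s hs v hv).2)
        · intro v hv
          exact hB s hs v (hst ▸ (hA t ht v hv).1) (hst ▸ (hA t ht v hv).2)
      -- enumerate maximal cliques ordered by their points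
      let F : Finset (Set V) := (Set.toFinite {s : Set V | IsMaxClique G s}).toFinset
      have hF : ∀ s : Set V, s ∈ F ↔ IsMaxClique G s := by
        intro s; simp [F]
      let T : Finset ℝ := F.image p
      let e : Fin T.card ≃o {x : ℝ // x ∈ T} := T.orderIsoOfFin rfl
      have key : ∀ i : Fin T.card, ∃ s : Set V, IsMaxClique G s ∧ p s = (e i : ℝ) := by
        intro i
        obtain ⟨s, hsF, hps⟩ := Finset.mem_image.mp (e i).2
        exact ⟨s, (hF s).mp hsF, hps⟩
      choose Cl hCl1 hCl2 using key
      refine ⟨T.card, Cl, ?_, ?_, ?_⟩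
      · intro i j h
        apply e.injective
        apply Subtype.ext
        rw [← hCl2 i, ← hCl2 j, h]
      · intro s
        constructor
        · rintro ⟨i, rfl⟩; exact hCl1 i
        · intro hs
          have hsT : p s ∈ T := Finset.mem_image.mpr ⟨s, (hF s).mpr hs, rfl⟩
          refine ⟨e.symm ⟨p s, hsT⟩, ?_⟩
          apply hC _ _ (hCl1 _) hs
          rw [hCl2]
          simp
      · intro v i j k hij hjk hvi hvk
        have h1 : p (Cl i) ≤ p (Cl j) := by
          rw [hCl2 i, hCl2 j]
          exact_mod_cast e.monotone hij
        have h2 : p (Cl j) ≤ p (Cl k) := by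
          rw [hCl2 j, hCl2 k]
          exact_mod_cast e.monotone hjk
        refine hB (Cl j) (hCl1 j) v ?_ ?_
        · exact le_trans (hA (Cl i) (hCl1 i) v hvi).1 h1
        · exact le_trans h2 (hA (Cl k) (hCl1 k) v hvk).2
  · rintro ⟨ℓ, C, _, hrange, hcons⟩
    -- every vertex belongs to some clique in the listing
    have hmem : ∀ v : V, ∃ i : Fin ℓ, v ∈ C i := by
      intro v
      obtain ⟨t, ht, hvt⟩ := exists_maxClique_superset G {v} (G.isClique_singleton v)
      obtain ⟨i, rfl⟩ := (hrange t).mpr ht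
      exact ⟨i, hvt rfl⟩
    let S : V → Finset (Fin ℓ) := fun v => Finset.univ.filter (fun i => v ∈ C i)
    have hS : ∀ v i, i ∈ S v ↔ v ∈ C i := by
      intro v i; simp [S]
    have hSne : ∀ v, (S v).Nonempty := by
      intro v
      obtain ⟨i, hi⟩ := hmem v
      exact ⟨i, (hS v i).mpr hi⟩
    refine ⟨fun v => (((S v).min' (hSne v) : Fin ℓ) : ℕ),
            fun v => (((S v).max' (hSne v) : Fin ℓ) : ℕ), ?_, ?_⟩
    · intro v
      have : (S v).min' (hSne v) ≤ (S v).max' (hSne v) :=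
        Finset.min'_le _ _ (Finset.max'_mem _ _)
      dsimp only
      exact_mod_cast this
    · intro u v huv
      constructor
      · intro hadj
        have hclique : G.IsClique {u, v} := by
          intro x hx y hy hxy
          rcases hx with rfl | hx <;> rcases hy with rfl | hy
          · exact absurd rfl hxy
          · rw [Set.mem_singleton_iff] at hy; subst hy; exact hadj
          · rw [Set.mem_singleton_iff] at hx; subst hx; exact hadj.symm
          · rw [Set.mem_singleton_iff] at hx hy; subst hx; subst hy
            exact absurd rfl hxy
        obtain ⟨t, ht, hsub⟩ := exists_maxClique_superset G {u, v} hclique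
        obtain ⟨i, rfl⟩ := (hrange t).mpr ht
        have hiu : i ∈ S u := (hS u i).mpr (hsub (Set.mem_insert u {v}))
        have hiv : i ∈ S v := (hS v i).mpr (hsub (Set.mem_insert_of_mem u rfl))
        refine ⟨(i : ℕ), ⟨?_, ?_⟩, ⟨?_, ?_⟩⟩ <;> dsimp only
        · exact_mod_cast Finset.min'_le _ i hiu
        · exact_mod_cast Finset.le_max' _ i hiu
        · exact_mod_cast Finset.min'_le _ i hiv
        · exact_mod_cast Finset.le_max' _ i hiv
      · rintro ⟨x, ⟨h1, h2⟩, h3, h4⟩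
        have hmuMv : (S u).min' (hSne u) ≤ (S v).max' (hSne v) := by
          have : ((((S u).min' (hSne u) : Fin ℓ) : ℕ) : ℝ) ≤
              ((((S v).max' (hSne v) : Fin ℓ) : ℕ) : ℝ) := h1.trans h4
          exact_mod_cast this
        have hmvMu : (S v).min' (hSne v) ≤ (S u).max' (hSne u) := by
          have : ((((S v).min' (hSne v) : Fin ℓ) : ℕ) : ℝ) ≤
              ((((S u).max' (hSne u) : Fin ℓ) : ℕ) : ℝ) := h3.trans h2
          exact_mod_cast this
        set j := max ((S u).min' (hSne u)) ((S v).min' (hSne v)) with hj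
        have hju : u ∈ C j := by
          refine hcons u ((S u).min' (hSne u)) j ((S u).max' (hSne u))
            (le_max_left _ _) (max_le (Finset.min'_le _ _ (Finset.max'_mem _ _)) hmvMu) ?_ ?_
          · exact (hS u _).mp (Finset.min'_mem _ _)
          · exact (hS u _).mp (Finset.max'_mem _ _)
        have hjv : v ∈ C j := by
          refine hcons v ((S v).min' (hSne v)) j ((S v).max' (hSne v))
            (le_max_right _ _) (max_le hmuMv (Finset.min'_le _ _ (Finset.max'_mem _ _))) ?_ ?_
          · exact (hS v _).mp (Finset.min'_mem _ _)
          · exact (hS v _).mp (Finset.max'_mem _ _)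
        have hmc : IsMaxClique G (C j) := (hrange (C j)).mp ⟨j, rfl⟩
        exact hmc.1 hju hjv huv
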